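/- arXiv:2210.09468 — 2 statements merged into one kernel-verified Lean document; each statement's English description precedes it below -/
import Mathlib

section
/- Let A and C be independent random n×n real matrices whose entries have finite fourth moments, suppose the columns C e₁, …, C eₙ of C are mutually independent random vectors, and let y ∈ ℝⁿ be fixed. Then E[ ((A y)ᵀ ⊗ Iₙ) · Var(vec(C)) · ((A y) ⊗ Iₙ) ] = (yᵀ ⊗ Iₙ) · ( Σ_{j=1}^{n} E[Aᵀ e_j e_jᵀ A] ⊗ Var(C e_j) ) · (y ⊗ Iₙ). -/
open MeasureTheory ProbabilityTheory Matrix Kronecker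

/-- The product measurable space on real matrices (entrywise). -/
instance matrixMeasurableSpace (n m : ℕ) : MeasurableSpace (Matrix (Fin n) (Fin m) ℝ) :=
  inferInstanceAs (MeasurableSpace (Fin n → Fin m → ℝ))

/-- The covariance matrix `Var(W) = E[(W - E W)(W - E W)ᵀ]` of a random vector `W`. -/
noncomputable def covMatrix {Ω : Type*} [MeasurableSpace Ω] (μ : Measure Ω)
    {ι : Type*} (W : Ω → ι → ℝ) : Matrix ι ι ℝ :=
  Matrix.of fun i j =>
    ∫ ω, (W ω i - ∫ ω', W ω' i ∂μ) * (W ω j - ∫ ω', W ω' j ∂μ) ∂μ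

/-- `vec(M)`: the vertical concatenation of the columns of `M`; the `(j, i)` component is
`M i j`. -/
def matVec {n p : ℕ} (M : Matrix (Fin n) (Fin p) ℝ) : Fin p × Fin n → ℝ :=
  fun jk => M jk.2 jk.1

lemma integrable_mul_of_memL2 {Ω : Type*} [MeasurableSpace Ω] {μ : Measure Ω} {f g : Ω → ℝ}
    (hf : MemLp f 2 μ) (hg : MemLp g 2 μ) : Integrable (fun ω => f ω * g ω) μ := by
  rw [← memLp_one_iff_integrable]
  have : MemLp (g • f) 1 μ := hf.smul hg
  have h' : MemLp (f * g) 1 μ := by simpa [smul_eq_mul, mul_comm] using this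
  exact h'

lemma kron_row_col_entry {n : ℕ} (w : Fin n → ℝ) (M : Matrix (Fin n × Fin n) (Fin n × Fin n) ℝ)
    (a b : Unit × Fin n) :
    (((Matrix.replicateRow Unit w ⊗ₖ (1 : Matrix (Fin n) (Fin n) ℝ)) * M *
      (Matrix.replicateCol Unit w ⊗ₖ (1 : Matrix (Fin n) (Fin n) ℝ))) a b)
    = ∑ j, ∑ q, w j * M (j, a.2) (q, b.2) * w q := by
  obtain ⟨u, i⟩ := a
  obtain ⟨v, k⟩ := b
  simp only [Matrix.mul_apply, Fintype.sum_prod_type, Matrix.one_apply, kroneckerMap_apply,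
    Matrix.replicateRow_apply, Matrix.replicateCol_apply, mul_ite, ite_mul, mul_zero, zero_mul, mul_one,
    Finset.sum_ite_eq, Finset.sum_ite_eq', Finset.mem_univ, if_true, Finset.univ_unique,
    Finset.sum_singleton, Finset.mul_sum]
  rw [Finset.sum_comm]
  simp_rw [Finset.sum_mul]

/-- For independent random `n×n` matrices `A` and `C`, with the columns of `C` mutually
independent, and a fixed `y ∈ ℝⁿ`:
`E[((A y)ᵀ ⊗ Iₙ) · Var(vec C) · ((A y) ⊗ Iₙ)]
  = (yᵀ ⊗ Iₙ) · (Σ_j E[Aᵀ e_j e_jᵀ A] ⊗ Var(C e_j)) · (y ⊗ Iₙ)`. -/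
theorem expected_kron_quadratic_form
    {Ω : Type*} [MeasurableSpace Ω] (μ : Measure Ω) [IsProbabilityMeasure μ]
    (n : ℕ) (A C : Ω → Matrix (Fin n) (Fin n) ℝ)
    (hAmeas : Measurable A) (hCmeas : Measurable C)
    (hA4 : ∀ i j, MemLp (fun ω => A ω i j) 4 μ)
    (hC4 : ∀ i j, MemLp (fun ω => C ω i j) 4 μ)
    (hindepAC : IndepFun A C μ)
    (hindepCols : iIndepFun (m := fun _ : Fin n => inferInstanceAs (MeasurableSpace (Fin n → ℝ)))
      (fun j ω => fun i => C ω i j) μ)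
    (y : Fin n → ℝ) :
    (Matrix.of fun a b =>
        ∫ ω, ((Matrix.replicateRow Unit ((A ω).mulVec y) ⊗ₖ (1 : Matrix (Fin n) (Fin n) ℝ)) *
                covMatrix μ (fun ω' => matVec (C ω')) *
                (Matrix.replicateCol Unit ((A ω).mulVec y) ⊗ₖ (1 : Matrix (Fin n) (Fin n) ℝ))) a b ∂μ)
      = (Matrix.replicateRow Unit y ⊗ₖ (1 : Matrix (Fin n) (Fin n) ℝ)) *
          (∑ j : Fin n,
            (Matrix.of fun a b =>
              ∫ ω, ((A ω)ᵀ * Matrix.single j j (1 : ℝ) * A ω) a b ∂μ) ⊗ₖ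
              covMatrix μ (fun ω i => C ω i j)) *
          (Matrix.replicateCol Unit y ⊗ₖ (1 : Matrix (Fin n) (Fin n) ℝ)) := by
  have hA2 : ∀ i j, MemLp (fun ω => A ω i j) 2 μ := fun i j =>
    (hA4 i j).mono_exponent (by norm_num)
  have hC1 : ∀ i j, Integrable (fun ω => C ω i j) μ := fun i j =>
    memLp_one_iff_integrable.mp ((hC4 i j).mono_exponent (by norm_num))
  have hAv : ∀ j, MemLp (fun ω => (A ω).mulVec y j) 2 μ := by
    intro j
    have h : (fun ω => (A ω).mulVec y j) = fun ω => ∑ p, y p * A ω j p := by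
      funext ω; simp [Matrix.mulVec, dotProduct, mul_comm]
    rw [h]
    exact memLp_finset_sum _ (fun p _ => (hA2 j p).const_mul _)
  -- cross covariance vanishes
  have hV : ∀ i k j q : Fin n, covMatrix μ (fun ω' => matVec (C ω')) (j, i) (q, k)
      = if q = j then covMatrix μ (fun ω i' => C ω i' j) i k else 0 := by
    intro i k j q
    by_cases hjq : q = j
    · subst hjq; rw [if_pos rfl]; rfl
    · rw [if_neg hjq]
      have hind : IndepFun (fun ω => C ω i j - ∫ ω', C ω' i j ∂μ)
          (fun ω => C ω k q - ∫ ω', C ω' k q ∂μ) μ := by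
        have h0 := hindepCols.indepFun (show j ≠ q from fun h => hjq h.symm)
        exact h0.comp (φ := fun v : Fin n → ℝ => v i - ∫ ω', C ω' i j ∂μ)
          (ψ := fun v : Fin n → ℝ => v k - ∫ ω', C ω' k q ∂μ)
          ((measurable_pi_apply i).sub_const _) ((measurable_pi_apply k).sub_const _)
      have hXint : Integrable (fun ω => C ω i j - ∫ ω', C ω' i j ∂μ) μ :=
        (hC1 i j).sub (integrable_const _)
      have hYint : Integrable (fun ω => C ω k q - ∫ ω', C ω' k q ∂μ) μ :=
        (hC1 k q).sub (integrable_const _)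
      have h2 : (∫ ω, (C ω i j - ∫ ω', C ω' i j ∂μ) * (C ω k q - ∫ ω', C ω' k q ∂μ) ∂μ)
          = (∫ ω, (C ω i j - ∫ ω', C ω' i j ∂μ) ∂μ) *
            ∫ ω, (C ω k q - ∫ ω', C ω' k q ∂μ) ∂μ :=
        IndepFun.integral_mul_eq_mul_integral hind hXint.1 hYint.1
      have hzero : ∫ ω, (C ω i j - ∫ ω', C ω' i j ∂μ) ∂μ = 0 := by
        rw [integral_sub (hC1 i j) (integrable_const _), integral_const]
        simp
      show (∫ ω, (C ω i j - ∫ ω', C ω' i j ∂μ) * (C ω k q - ∫ ω', C ω' k q ∂μ) ∂μ) = 0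
      rw [h2, hzero, zero_mul]
  ext a b
  obtain ⟨u, i⟩ := a
  obtain ⟨v, k⟩ := b
  simp only [kron_row_col_entry, Matrix.of_apply]
  simp_rw [hV i k]
  simp only [mul_ite, mul_zero, ite_mul, zero_mul, Finset.sum_ite_eq, Finset.sum_ite_eq',
    Finset.mem_univ, if_true]
  have hint : ∀ j : Fin n, Integrable (fun ω =>
      (A ω).mulVec y j * covMatrix μ (fun ω i' => C ω i' j) i k * (A ω).mulVec y j) μ := by
    intro j
    have h : (fun ω => (A ω).mulVec y j * covMatrix μ (fun ω i' => C ω i' j) i k *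
        (A ω).mulVec y j)
        = fun ω => ((A ω).mulVec y j * (A ω).mulVec y j) *
            covMatrix μ (fun ω i' => C ω i' j) i k := by
      funext ω; ring
    rw [h]
    exact (integrable_mul_of_memL2 (hAv j) (hAv j)).mul_const _
  rw [integral_finset_sum _ (fun j _ => hint j)]
  have hMj : ∀ (ω : Ω) (j p q : Fin n), ((A ω)ᵀ * Matrix.single j j (1:ℝ) * A ω) p q
      = A ω j p * A ω j q := by
    intro ω j p q
    simp [Matrix.mul_apply, Matrix.single, Matrix.transpose_apply, ite_mul, mul_ite,
      ite_and, Finset.sum_ite_eq, Finset.sum_ite_eq']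
  simp_rw [Matrix.sum_apply, Matrix.kroneckerMap_apply, Matrix.of_apply, hMj]
  have key : ∀ j : Fin n, (∫ ω, (A ω).mulVec y j *
        covMatrix μ (fun ω i' => C ω i' j) i k * (A ω).mulVec y j ∂μ)
      = ∑ p, ∑ q, y p * ((∫ ω, A ω j p * A ω j q ∂μ) *
          covMatrix μ (fun ω i' => C ω i' j) i k) * y q := by
    intro j
    set Vj := covMatrix μ (fun ω i' => C ω i' j) i k with hVj
    have hexp : ∀ ω, (A ω).mulVec y j * Vj * (A ω).mulVec y j
        = ∑ p, ∑ q, (A ω j p * A ω j q) * (y p * Vj * y q) := by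
      intro ω
      simp only [Matrix.mulVec, dotProduct]
      rw [show (∑ p, A ω j p * y p) * Vj * (∑ q, A ω j q * y q)
          = (∑ p, A ω j p * y p) * (∑ q, A ω j q * y q) * Vj by ring,
        Finset.sum_mul_sum, Finset.sum_mul]
      refine Finset.sum_congr rfl fun p _ => ?_
      rw [Finset.sum_mul]
      exact Finset.sum_congr rfl fun q _ => by ring
    simp_rw [hexp]
    rw [integral_finset_sum _ (fun p _ => integrable_finset_sum _
      (fun q _ => (integrable_mul_of_memL2 (hA2 j p) (hA2 j q)).mul_const _))]
    refine Finset.sum_congr rfl fun p _ => ?_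
    rw [integral_finset_sum _
      (fun q _ => (integrable_mul_of_memL2 (hA2 j p) (hA2 j q)).mul_const _)]
    refine Finset.sum_congr rfl fun q _ => ?_
    rw [integral_mul_const]
    ring
  simp_rw [key, Finset.mul_sum, Finset.sum_mul]
  rw [Finset.sum_comm]
  exact Finset.sum_congr rfl fun p _ => Finset.sum_comm
end

section
/- For every λ > 0, the function g : (0, ∞) → ℝ defined by g(y) = (2/3)·ln(y) − (y^{1/3}/λ)⁵ is concave on (0, ∞). Consequently, the probability density function of the cube X³ of a Weibull random variable X with shape parameter 5 and scale parameter λ, namely y ↦ (5/(3λ⁵)) · y^{2/3} · exp(−(y^{1/3}/λ)⁵) on (0, ∞), is log-concave on (0, ∞). -/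
open Real Set

lemma aux_concave (c : ℝ) (hc : 0 ≤ c) :
    ConcaveOn ℝ (Set.Ioi (0 : ℝ))
      (fun y : ℝ => (2 / 3) * Real.log y - c * y ^ ((5 : ℝ) / 3)) := by
  have hlog : ConcaveOn ℝ (Set.Ioi (0 : ℝ)) (fun y => (2 / 3) * Real.log y) :=
    (strictConcaveOn_log_Ioi.concaveOn.smul (by norm_num : (0:ℝ) ≤ 2/3)).congr
      (fun x _ => by simp [smul_eq_mul])
  have hr : ConvexOn ℝ (Set.Ioi (0 : ℝ)) (fun y : ℝ => c * y ^ ((5 : ℝ) / 3)) := by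
    have := (convexOn_rpow (by norm_num : (1:ℝ) ≤ 5/3)).smul hc
    exact (this.subset Ioi_subset_Ici_self (convex_Ioi 0)).congr
      (fun x _ => by simp [smul_eq_mul])
  exact hlog.sub hr

/-- For every `λ > 0`, the function `g(y) = (2/3)·ln y − (y^{1/3}/λ)⁵` is concave on
`(0, ∞)`; consequently, the probability density function of the cube of a
`Weibull(5, λ)` random variable, `y ↦ (5/(3λ⁵)) · y^{2/3} · exp(−(y^{1/3}/λ)⁵)`, is
log-concave on `(0, ∞)`. -/
theorem weibull_cube_density_log_concave (lam : ℝ) (hlam : 0 < lam) :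
    ConcaveOn ℝ (Set.Ioi (0 : ℝ))
      (fun y : ℝ => (2 / 3) * Real.log y - (y ^ ((1 : ℝ) / 3) / lam) ^ (5 : ℕ)) ∧
    ConcaveOn ℝ (Set.Ioi (0 : ℝ))
      (fun y : ℝ => Real.log
        ((5 / (3 * lam ^ (5 : ℕ))) * y ^ ((2 : ℝ) / 3) *
          Real.exp (-(y ^ ((1 : ℝ) / 3) / lam) ^ (5 : ℕ)))) := by
  have hc : (0:ℝ) ≤ (lam ^ (5:ℕ))⁻¹ := by positivity
  have key : ∀ y ∈ Set.Ioi (0:ℝ),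
      (y ^ ((1 : ℝ) / 3) / lam) ^ (5 : ℕ) = (lam ^ (5:ℕ))⁻¹ * y ^ ((5 : ℝ) / 3) := by
    intro y hy
    have hy' : (0:ℝ) ≤ y := (le_of_lt hy)
    rw [div_pow, ← Real.rpow_natCast (y ^ ((1:ℝ)/3)) 5, ← Real.rpow_mul hy']
    norm_num
    ring
  have h1 : ConcaveOn ℝ (Set.Ioi (0 : ℝ))
      (fun y : ℝ => (2 / 3) * Real.log y - (y ^ ((1 : ℝ) / 3) / lam) ^ (5 : ℕ)) := by
    refine (aux_concave _ hc).congr fun y hy => ?_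
    simp only [key y hy]
  refine ⟨h1, ?_⟩
  have hconst : ConcaveOn ℝ (Set.Ioi (0:ℝ))
      (fun _ : ℝ => Real.log (5 / (3 * lam ^ (5:ℕ)))) := concaveOn_const _ (convex_Ioi 0)
  refine (hconst.add h1).congr fun y hy => ?_
  have hy0 : (0:ℝ) < y := hy
  have h23 : y ^ ((2:ℝ)/3) = Real.exp ((2/3) * Real.log y) := by
    rw [Real.rpow_def_of_pos hy0, mul_comm]
  have hC : (0:ℝ) < 5 / (3 * lam ^ (5:ℕ)) := by positivity
  simp only [h23]
  rw [Real.log_mul (by positivity) (Real.exp_ne_zero _),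
    Real.log_mul (ne_of_gt hC) (Real.exp_ne_zero _), Real.log_exp, Real.log_exp]
  simp only [Pi.add_apply, div_pow]
  ring
end
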